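/- Let (r_n) be nonnegative with r_n ≤ (1 - γ_n) r_{n-1} + γ_n a_n for n > n_0, where γ_n = c/(n^γ + c') with c > 0, c' ≥ 0, γ ∈ (0,1), and (a_n) is nonincreasing and tends to 0. Then for any κ with 0 < κ < c(1 - 2^{γ-1})/(1-γ), there exists C such that r_n ≤ C(exp(-κ n^{1-γ}) + a_{⌈n/2⌉}) for all n; in particular r_n → 0. -/

import Mathlib

open Filter Finset

/-- Boundedness of the sequence `r`. -/
lemma rb_bounded (r γs a : ℕ → ℝ) (n0 : ℕ) (c c' g : ℝ) (hc : 0 < c) (hc' : 0 ≤ c')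
    (hg0 : 0 < g)
    (hγ : ∀ n : ℕ, γs n = c / ((n : ℝ) ^ g + c'))
    (hr : ∀ n, 0 ≤ r n) (ha : ∀ n, 0 ≤ a n)
    (hamono : ∀ m n : ℕ, m ≤ n → a n ≤ a m)
    (hrec : ∀ n, n0 < n → r n ≤ (1 - γs n) * r (n - 1) + γs n * a n) :
    ∃ B : ℝ, 0 ≤ B ∧ ∀ n, r n ≤ B := by
  refine ⟨(∑ k ∈ Finset.range (n0+1), r k) + (c+1) * a 0,
    add_nonneg (Finset.sum_nonneg (fun k _ => hr k)) (mul_nonneg (by linarith) (ha 0)), ?_⟩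
  intro n
  induction n using Nat.strong_induction_on with
  | _ n ih =>
    rcases le_or_gt n n0 with hn | hn
    · have h1 : r n ≤ ∑ k ∈ Finset.range (n0+1), r k :=
        Finset.single_le_sum (fun k _ => hr k) (Finset.mem_range.mpr (by omega))
      nlinarith [ha 0]
    · have hn1 : 1 ≤ n := by omega
      have hng : (1:ℝ) ≤ (n:ℝ) ^ g := Real.one_le_rpow (by exact_mod_cast hn1) hg0.le
      have hden : (1:ℝ) ≤ (n:ℝ) ^ g + c' := by linarith
      have hγn : γs n ≤ c := by
        rw [hγ n, div_le_iff₀ (by linarith)]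
        nlinarith
      have hγ0 : 0 ≤ γs n := by rw [hγ n]; positivity
      have hrn := hrec n hn
      have hprev : r (n-1) ≤ (∑ k ∈ Finset.range (n0+1), r k) + (c+1) * a 0 := ih (n-1) (by omega)
      have han : a n ≤ a 0 := hamono 0 n (by omega)
      have hsum0 : (0:ℝ) ≤ ∑ k ∈ Finset.range (n0+1), r k :=
        Finset.sum_nonneg (fun k _ => hr k)
      have hB'a : a 0 ≤ (∑ k ∈ Finset.range (n0+1), r k) + (c+1) * a 0 := by
        nlinarith [ha 0]
      rcases le_or_gt (γs n) 1 with h1 | h1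
      · have p1 : (1 - γs n) * r (n-1)
            ≤ (1 - γs n) * ((∑ k ∈ Finset.range (n0+1), r k) + (c+1) * a 0) :=
          mul_le_mul_of_nonneg_left hprev (by linarith)
        have p2 : γs n * a n ≤ γs n * a 0 := mul_le_mul_of_nonneg_left han hγ0
        have p3 : γs n * a 0 ≤ γs n * ((∑ k ∈ Finset.range (n0+1), r k) + (c+1) * a 0) :=
          mul_le_mul_of_nonneg_left hB'a hγ0
        nlinarith
      · have p1 : (1 - γs n) * r (n-1) ≤ 0 :=
          mul_nonpos_of_nonpos_of_nonneg (by linarith) (hr (n-1))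
        have p2 : γs n * a n ≤ c * a 0 :=
          mul_le_mul hγn han (ha n) hc.le
        nlinarith [ha 0]

/-- Unrolling the recursion from index `m`. -/
lemma rb_unroll (r γs a : ℕ → ℝ) (n0 m : ℕ) (B : ℝ)
    (hr : ∀ n, 0 ≤ r n) (hB0 : 0 ≤ B) (hB : ∀ n, r n ≤ B)
    (ha : ∀ n, 0 ≤ a n) (hamono : ∀ i j : ℕ, i ≤ j → a j ≤ a i)
    (hrec : ∀ n, n0 < n → r n ≤ (1 - γs n) * r (n - 1) + γs n * a n)
    (hγ01 : ∀ k, m < k → 0 ≤ γs k ∧ γs k ≤ 1)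
    (hm : n0 < m) :
    ∀ n, m ≤ n → r n ≤ Real.exp (-(∑ k ∈ Finset.Ioc m n, γs k)) * B + a (m+1) := by
  intro n hn
  induction n, hn using Nat.le_induction with
  | base =>
    simp only [Finset.Ioc_self, Finset.sum_empty, neg_zero, Real.exp_zero, one_mul]
    have := ha (m+1); have := hB m; linarith
  | succ n hn ih =>
    have h2 := hrec (n+1) (by omega)
    rw [Nat.add_sub_cancel] at h2
    obtain ⟨hg0, hg1⟩ := hγ01 (n+1) (by omega)
    rw [Finset.sum_Ioc_succ_top hn]
    set S := ∑ k ∈ Finset.Ioc m n, γs k with hS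
    have hE : (0:ℝ) ≤ Real.exp (-S) := (Real.exp_pos _).le
    have h3 : 1 - γs (n+1) ≤ Real.exp (-(γs (n+1))) := by
      have := Real.add_one_le_exp (-(γs (n+1))); linarith
    have h4 : a (n+1) ≤ a (m+1) := hamono _ _ (by omega)
    have hexp : Real.exp (-(S + γs (n+1))) = Real.exp (-(γs (n+1))) * Real.exp (-S) := by
      rw [← Real.exp_add]; ring_nf
    rw [hexp]
    have ham1 : 0 ≤ a (m+1) := ha (m+1)
    have e1 : (1 - γs (n+1)) * r n ≤ (1 - γs (n+1)) * (Real.exp (-S) * B + a (m+1)) :=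
      mul_le_mul_of_nonneg_left ih (by linarith)
    have e2 : (1 - γs (n+1)) * (Real.exp (-S) * B) ≤ Real.exp (-(γs (n+1))) * (Real.exp (-S) * B) :=
      mul_le_mul_of_nonneg_right h3 (by positivity)
    have e3 : γs (n+1) * a (n+1) ≤ γs (n+1) * a (m+1) :=
      mul_le_mul_of_nonneg_left h4 hg0
    nlinarith [h2]

/-- Sum of `k^{-g}` over `Ioc m n` is at least the corresponding integral. -/
lemma rb_sum_rpow (g : ℝ) (hg0 : 0 < g) (hg1 : g < 1) (m n : ℕ) (hmn : m ≤ n) :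
    (((n:ℝ)+1) ^ (1-g) - ((m:ℝ)+1) ^ (1-g)) / (1-g) ≤ ∑ k ∈ Finset.Ioc m n, (k:ℝ) ^ (-g) := by
  have hx0 : (0:ℝ) < (m:ℝ) + 1 := by positivity
  have hanti : AntitoneOn (fun x : ℝ => x ^ (-g)) (Set.Icc ((m:ℝ)+1) (((m:ℝ)+1) + (n-m : ℕ))) := by
    intro x hx y hy hxy
    exact Real.rpow_le_rpow_of_nonpos (lt_of_lt_of_le hx0 hx.1) hxy (by linarith)
  have hint := hanti.integral_le_sum
  have hcast : ((m:ℝ)+1) + ((n-m : ℕ) : ℝ) = (n:ℝ) + 1 := by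
    rw [Nat.cast_sub hmn]; ring
  have hInt : (∫ x in ((m:ℝ)+1)..(((m:ℝ)+1) + ((n-m : ℕ) : ℝ)), x ^ (-g))
      = ((((n:ℝ)+1)) ^ (1-g) - (((m:ℝ)+1)) ^ (1-g)) / (1-g) := by
    rw [integral_rpow (Or.inl (by linarith))]
    rw [hcast]
    have : -g + 1 = 1 - g := by ring
    rw [this]
  have hsum : (∑ i ∈ Finset.range (n-m), (((m:ℝ)+1) + (i:ℕ)) ^ (-g))
      = ∑ k ∈ Finset.Ioc m n, (k:ℝ) ^ (-g) := by
    rw [← Finset.Icc_add_one_left_eq_Ioc, ← Finset.Ico_add_one_right_eq_Icc, Finset.sum_Ico_eq_sum_range]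
    have h : n + 1 - (m + 1) = n - m := by omega
    rw [h]
    apply Finset.sum_congr rfl
    intro i _
    congr 1
    push_cast
    ring
  rw [hInt, hsum] at hint
  exact hint

set_option maxHeartbeats 1000000 in
theorem recursive_bound_polynomial_steps (r γseq a : ℕ → ℝ) (n0 : ℕ)
    (c c' g : ℝ) (hc : 0 < c) (hc' : 0 ≤ c') (hg0 : 0 < g) (hg1 : g < 1)
    (hγ : ∀ n : ℕ, γseq n = c / ((n : ℝ) ^ g + c'))
    (hr : ∀ n, 0 ≤ r n) (ha : ∀ n, 0 ≤ a n)
    (hamono : ∀ m n : ℕ, m ≤ n → a n ≤ a m)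
    (halim : Tendsto a atTop (nhds 0))
    (hrec : ∀ n, n0 < n → r n ≤ (1 - γseq n) * r (n - 1) + γseq n * a n) :
    (∀ κ : ℝ, 0 < κ → κ < c * (1 - (2:ℝ) ^ (g - 1)) / (1 - g) →
      ∃ C : ℝ, ∀ n : ℕ,
        r n ≤ C * (Real.exp (-κ * (n : ℝ) ^ (1 - g)) + a ((n + 1) / 2))) ∧
    Tendsto r atTop (nhds 0) := by
  have hp : 0 < 1 - g := by linarith
  obtain ⟨B, hB0, hB⟩ := rb_bounded r γseq a n0 c c' g hc hc' hg0 hγ hr ha hamono hrec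
  have h2lt : (2:ℝ) ^ (g-1) < 1 :=
    Real.rpow_lt_one_of_one_lt_of_neg (by norm_num) (by linarith)
  have hL0 : 0 < c * (1 - (2:ℝ) ^ (g - 1)) / (1 - g) := by
    apply div_pos (by nlinarith) hp
  have hnat : Tendsto (fun n : ℕ => (n:ℝ)) atTop atTop := tendsto_natCast_atTop_atTop
  have key : ∀ κ : ℝ, 0 < κ → κ < c * (1 - (2:ℝ) ^ (g - 1)) / (1 - g) →
      ∃ C : ℝ, 0 ≤ C ∧ ∀ n : ℕ,
        r n ≤ C * (Real.exp (-κ * (n : ℝ) ^ (1 - g)) + a ((n + 1) / 2)) := by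
    intro κ hκ0 hκL
    set L := c * (1 - (2:ℝ) ^ (g - 1)) / (1 - g) with hLdef
    set ε := (L / κ - 1) / 2 with hε
    have hLκ : 1 < L / κ := (one_lt_div hκ0).mpr hκL
    have hε0 : 0 < ε := by rw [hε]; linarith
    have hκε : κ * (1 + ε) < L := by
      have h : κ * (L / κ) = L := by field_simp
      nlinarith
    have hinv : Tendsto (fun n : ℕ => ((n:ℝ))⁻¹) atTop (nhds 0) := by
      simpa [one_div] using tendsto_one_div_atTop_nhds_zero_nat (𝕜 := ℝ)
    have hrat1 : Tendsto (fun n : ℕ => ((n:ℝ)+1)/(n:ℝ)) atTop (nhds 1) := by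
      have h : ∀ᶠ n : ℕ in atTop, ((n:ℝ)+1)/(n:ℝ) = 1 + ((n:ℝ))⁻¹ := by
        filter_upwards [eventually_gt_atTop 0] with n hn
        have : (n:ℝ) ≠ 0 := by positivity
        field_simp
      rw [tendsto_congr' h]
      simpa using tendsto_const_nhds.add hinv
    have hrat2 : Tendsto (fun n : ℕ => ((n:ℝ)+3)/(2*(n:ℝ))) atTop (nhds (1/2)) := by
      have h : ∀ᶠ n : ℕ in atTop, ((n:ℝ)+3)/(2*(n:ℝ)) = 1/2 + (3/2) * ((n:ℝ))⁻¹ := by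
        filter_upwards [eventually_gt_atTop 0] with n hn
        have : (n:ℝ) ≠ 0 := by positivity
        field_simp
      rw [tendsto_congr' h]
      have h2 := hinv.const_mul (3/2 : ℝ)
      simpa using tendsto_const_nhds.add h2
    have hcont : ∀ {l : ℝ} {f : ℕ → ℝ}, (0 < l) → Tendsto f atTop (nhds l) →
        Tendsto (fun n => (f n) ^ (1-g)) atTop (nhds (l ^ (1-g))) := by
      intro l f hl hf
      exact ((Real.continuousAt_rpow_const l (1-g) (Or.inl hl.ne')).tendsto).comp hf
    have hlim : Tendsto (fun n : ℕ => (((n:ℝ)+1)/(n:ℝ)) ^ (1-g) - (((n:ℝ)+3)/(2*(n:ℝ))) ^ (1-g))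
        atTop (nhds (1 - (2:ℝ) ^ (g-1))) := by
      have h1 := hcont one_pos hrat1
      have h2 := hcont (by norm_num : (0:ℝ) < 1/2) hrat2
      have e1 : (1:ℝ) ^ (1-g) = 1 := Real.one_rpow _
      have e2 : ((1:ℝ)/2) ^ (1-g) = (2:ℝ) ^ (g-1) := by
        have h12 : ((1:ℝ)/2) = (2:ℝ) ^ ((-1 : ℝ)) := by
          rw [Real.rpow_neg_one]; norm_num
        rw [h12, ← Real.rpow_mul (by norm_num : (0:ℝ) ≤ 2)]
        congr 1
        ring
      rw [e1] at h1; rw [e2] at h2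
      simpa using h1.sub h2
    set κ' := κ * (1 + ε) * (1-g) / c with hκ'
    have hκ'0 : 0 < κ' := by rw [hκ']; positivity
    have hκ'lt : κ' < 1 - (2:ℝ) ^ (g-1) := by
      rw [hκ', div_lt_iff₀ hc]
      have h : L * (1 - g) = c * (1 - (2:ℝ) ^ (g-1)) := by
        rw [hLdef]; field_simp
      nlinarith
    have hev1 : ∀ᶠ n : ℕ in atTop,
        κ' ≤ (((n:ℝ)+1)/(n:ℝ)) ^ (1-g) - (((n:ℝ)+3)/(2*(n:ℝ))) ^ (1-g) :=
      hlim.eventually (eventually_ge_nhds hκ'lt)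
    have hkg : Tendsto (fun k : ℕ => (k:ℝ) ^ g) atTop atTop :=
      (tendsto_rpow_atTop hg0).comp hnat
    have hev2 : ∀ᶠ k : ℕ in atTop, c ≤ (k:ℝ) ^ g := hkg.eventually_ge_atTop c
    have hev3 : ∀ᶠ k : ℕ in atTop, c'/ε ≤ (k:ℝ) ^ g := hkg.eventually_ge_atTop (c'/ε)
    obtain ⟨K1, hK1⟩ := eventually_atTop.mp (hev2.and hev3)
    obtain ⟨N2, hN2⟩ := eventually_atTop.mp hev1
    set N := max (2*K1 + 2) (max N2 (max (2*n0+2) 1)) with hNdef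
    set C := (B+1) * Real.exp (κ * (N:ℝ) ^ (1-g)) with hC
    have hC1 : 1 ≤ Real.exp (κ * (N:ℝ) ^ (1-g)) := by
      rw [Real.one_le_exp_iff]
      positivity
    have hCB : B ≤ C := by nlinarith
    have hC1' : 1 ≤ C := by nlinarith
    have hC0 : 0 ≤ C := by linarith
    refine ⟨C, hC0, ?_⟩
    intro n
    have hγnn : ∀ k : ℕ, 0 ≤ γseq k := by
      intro k; rw [hγ k]; positivity
    rcases lt_or_ge n N with hn | hn
    · -- small n : use boundedness of r
      have h1 : (n:ℝ) ^ (1-g) ≤ (N:ℝ) ^ (1-g) :=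
        Real.rpow_le_rpow (by positivity) (by exact_mod_cast hn.le) hp.le
      have h2 : (1:ℝ) ≤ Real.exp (κ * (N:ℝ)^(1-g)) * Real.exp (-κ * (n:ℝ)^(1-g)) := by
        rw [← Real.exp_add, Real.one_le_exp_iff]
        nlinarith
      have h3 : 0 ≤ a ((n+1)/2) := ha _
      have h4 : 0 < Real.exp (-κ * (n:ℝ)^(1-g)) := Real.exp_pos _
      calc r n ≤ B := hB n
        _ ≤ (B+1) * (Real.exp (κ * (N:ℝ)^(1-g)) * Real.exp (-κ * (n:ℝ)^(1-g))) := by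
            nlinarith
        _ = C * Real.exp (-κ * (n:ℝ)^(1-g)) := by rw [hC]; ring
        _ ≤ C * (Real.exp (-κ * (n:ℝ)^(1-g)) + a ((n+1)/2)) := by nlinarith
    · -- large n : use the recursion
      set m := (n+1)/2 with hm
      have hmn : m ≤ n := by omega
      have hmn0 : n0 < m := by omega
      have hmK1 : K1 ≤ m := by omega
      have hm1 : 1 ≤ m := by omega
      have hnN2 : N2 ≤ n := by omega
      have hn1 : 1 ≤ n := by omega
      have hγ01 : ∀ k, m < k → 0 ≤ γseq k ∧ γseq k ≤ 1 := by
        intro k hk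
        refine ⟨hγnn k, ?_⟩
        have hck := (hK1 k (by omega)).1
        rw [hγ k, div_le_one (by nlinarith)]
        linarith
      have hunroll := rb_unroll r γseq a n0 m B hr hB0 hB ha hamono hrec hγ01 hmn0 n hmn
      -- lower bound the sum term by term
      have hsum1 : (c/(1+ε)) * ∑ k ∈ Finset.Ioc m n, (k:ℝ) ^ (-g)
          ≤ ∑ k ∈ Finset.Ioc m n, γseq k := by
        rw [Finset.mul_sum]
        apply Finset.sum_le_sum
        intro k hk
        obtain ⟨hkm, hkn⟩ := Finset.mem_Ioc.mp hk
        have hk1 : 1 ≤ k := by omega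
        have hkg1 : (1:ℝ) ≤ (k:ℝ) ^ g := Real.one_le_rpow (by exact_mod_cast hk1) hg0.le
        have hc'k := (hK1 k (by omega)).2
        have hden : (k:ℝ) ^ g + c' ≤ (1+ε) * (k:ℝ) ^ g := by
          rw [div_le_iff₀ hε0] at hc'k
          nlinarith
        rw [hγ k, Real.rpow_neg (by positivity)]
        have hne1 : (1+ε) ≠ 0 := by positivity
        have hnek : ((k:ℝ)^g) ≠ 0 := by positivity
        have heq : (c/(1+ε)) * ((k:ℝ)^g)⁻¹ = c / ((1+ε) * (k:ℝ)^g) := by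
          field_simp
        rw [heq]
        exact div_le_div_of_nonneg_left hc.le (by nlinarith) hden
      have hsum2 := rb_sum_rpow g hg0 hg1 m n hmn
      -- (m:ℝ)+1 ≤ ((n:ℝ)+3)/2
      have hmreal : (m:ℝ) + 1 ≤ ((n:ℝ)+3)/2 := by
        have : (2*m : ℕ) ≤ n + 1 := by omega
        have h2 : (2*(m:ℝ)) ≤ (n:ℝ) + 1 := by exact_mod_cast this
        linarith
      have hmono2 : ((m:ℝ)+1) ^ (1-g) ≤ (((n:ℝ)+3)/2) ^ (1-g) :=
        Real.rpow_le_rpow (by positivity) hmreal hp.le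
      -- ratio bound at n
      have hratn := hN2 n hnN2
      have hnpos : (0:ℝ) < (n:ℝ) := by exact_mod_cast hn1
      have hnp : (0:ℝ) < (n:ℝ) ^ (1-g) := Real.rpow_pos_of_pos hnpos _
      have hdiff : κ' * (n:ℝ)^(1-g) ≤ ((n:ℝ)+1)^(1-g) - (((n:ℝ)+3)/2)^(1-g) := by
        have hd1 : (((n:ℝ)+1)/(n:ℝ)) ^ (1-g) = ((n:ℝ)+1)^(1-g) / (n:ℝ)^(1-g) :=
          Real.div_rpow (by positivity) (by positivity) _
        have hd2 : ((((n:ℝ)+3)/2)/(n:ℝ)) ^ (1-g) = (((n:ℝ)+3)/2)^(1-g) / (n:ℝ)^(1-g) :=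
          Real.div_rpow (by positivity) (by positivity) _
        have he : ((n:ℝ)+3)/(2*(n:ℝ)) = (((n:ℝ)+3)/2)/(n:ℝ) := by
          field_simp
        rw [he, hd1, hd2] at hratn
        rw [div_sub_div_same, le_div_iff₀ hnp] at hratn
        linarith
      -- putting the sum bound together
      have hS : κ * (n:ℝ)^(1-g) ≤ ∑ k ∈ Finset.Ioc m n, γseq k := by
        have hce : 0 < c/(1+ε) := by positivity
        have t1 : (c/(1+ε)) * ((((n:ℝ)+1) ^ (1-g) - ((m:ℝ)+1) ^ (1-g)) / (1-g))
            ≤ (c/(1+ε)) * ∑ k ∈ Finset.Ioc m n, (k:ℝ) ^ (-g) :=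
          mul_le_mul_of_nonneg_left hsum2 hce.le
        have t2 : κ * (n:ℝ)^(1-g)
            ≤ (c/(1+ε)) * ((((n:ℝ)+1) ^ (1-g) - ((m:ℝ)+1) ^ (1-g)) / (1-g)) := by
          have t3 : κ' * (n:ℝ)^(1-g) ≤ ((n:ℝ)+1)^(1-g) - ((m:ℝ)+1)^(1-g) := by
            linarith
          have t4 : (c/(1+ε)) * (κ' * (n:ℝ)^(1-g) / (1-g))
              ≤ (c/(1+ε)) * ((((n:ℝ)+1) ^ (1-g) - ((m:ℝ)+1) ^ (1-g)) / (1-g)) := by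
            exact mul_le_mul_of_nonneg_left ((div_le_div_iff_of_pos_right hp).mpr t3) hce.le
          have t5 : (c/(1+ε)) * (κ' * (n:ℝ)^(1-g) / (1-g)) = κ * (n:ℝ)^(1-g) := by
            rw [hκ']
            field_simp
          linarith [t4, t5.symm.le]
        linarith
      -- conclude
      have hexp : Real.exp (-(∑ k ∈ Finset.Ioc m n, γseq k)) ≤ Real.exp (-κ * (n:ℝ)^(1-g)) := by
        apply Real.exp_le_exp.mpr
        nlinarith
      have hfin := hunroll
      have ham : a (m+1) ≤ a m := hamono m (m+1) (by omega)
      have hepos : (0:ℝ) ≤ Real.exp (-κ * (n:ℝ)^(1-g)) := (Real.exp_pos _).le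
      have hexppos : (0:ℝ) ≤ Real.exp (-(∑ k ∈ Finset.Ioc m n, γseq k)) := (Real.exp_pos _).le
      have ham0 : 0 ≤ a m := ha m
      calc r n ≤ Real.exp (-(∑ k ∈ Finset.Ioc m n, γseq k)) * B + a (m+1) := hfin
        _ ≤ Real.exp (-κ * (n:ℝ)^(1-g)) * B + a m := by nlinarith
        _ ≤ C * (Real.exp (-κ * (n:ℝ)^(1-g)) + a m) := by nlinarith
  constructor
  · intro κ hκ0 hκL
    obtain ⟨C, _, hCn⟩ := key κ hκ0 hκL
    exact ⟨C, hCn⟩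
  · set κ₀ := c * (1 - (2:ℝ) ^ (g - 1)) / (1 - g) / 2 with hκ₀
    obtain ⟨C, hC0, hCn⟩ := key κ₀ (half_pos hL0) (by rw [hκ₀]; linarith)
    have hhalf : Tendsto (fun n : ℕ => (n+1)/2) atTop atTop := by
      apply tendsto_atTop_atTop.mpr
      intro b
      exact ⟨2*b, fun n hn => by omega⟩
    have ha0 : Tendsto (fun n : ℕ => a ((n+1)/2)) atTop (nhds 0) := halim.comp hhalf
    have hexp0 : Tendsto (fun n : ℕ => Real.exp (-κ₀ * (n:ℝ)^(1-g))) atTop (nhds 0) := by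
      have h1 : Tendsto (fun n : ℕ => κ₀ * (n:ℝ)^(1-g)) atTop atTop :=
        ((tendsto_rpow_atTop hp).comp hnat).const_mul_atTop (half_pos hL0)
      have h2 := Real.tendsto_exp_neg_atTop_nhds_zero.comp h1
      convert h2 using 2 with n
      simp [Function.comp, neg_mul]
    have hg' : Tendsto (fun n : ℕ => C * (Real.exp (-κ₀ * (n:ℝ)^(1-g)) + a ((n+1)/2)))
        atTop (nhds 0) := by
      have := ((hexp0.add ha0).const_mul C)
      simpa using this
    exact squeeze_zero hr hCn hg'
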